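/- Let b₁ : ℂ → ℂ be an entire function. Then (1+|ξ|²)·(b₁'(ξ) − conj(b₁'(ξ))) = 2·conj(ξ)·b₁(ξ) − 2·ξ·conj(b₁(ξ)) holds for all ξ ∈ ℂ if and only if there exist c₃ ∈ ℂ and c₄ ∈ ℝ such that b₁(ξ) = c₃ + c₄·ξ − conj(c₃)·ξ² for all ξ ∈ ℂ. -/

import Mathlib

open Complex ComplexConjugate

/-- If `f` is differentiable at `conj z`, then `conj ∘ f ∘ conj` is differentiable at `z`
with derivative `conj f'`. -/
lemma hasDerivAt_conj_conj (f : ℂ → ℂ) (f' z : ℂ) (hf : HasDerivAt f f' ((conj z : ℂ))) :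
    HasDerivAt (fun w => (conj (f (conj w)) : ℂ)) (conj f') z := by
  rw [hasDerivAt_iff_isLittleO] at hf ⊢
  have h1 : Filter.Tendsto (fun w : ℂ => (conj w : ℂ)) (nhds z) (nhds (conj z)) :=
    (Complex.continuous_conj.tendsto z)
  have h2 := hf.comp_tendsto h1
  have e1 : ∀ w : ℂ, conj (f (conj w)) - conj (f (conj z)) - (w - z) • (conj f' : ℂ) =
      conj (f (conj w) - f (conj z) - ((conj w : ℂ) - conj z) • f') := by
    intro w
    simp only [smul_eq_mul, map_sub, map_mul, Complex.conj_conj]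
  simp only [e1]
  rw [← Asymptotics.isLittleO_norm_norm]
  have e2 : ∀ w : ℂ, ‖(conj (f (conj w) - f (conj z) - ((conj w : ℂ) - conj z) • f') : ℂ)‖ =
      ‖f (conj w) - f (conj z) - ((conj w : ℂ) - conj z) • f'‖ := fun w => RCLike.norm_conj _
  have e3 : ∀ w : ℂ, ‖w - z‖ = ‖(conj w : ℂ) - conj z‖ := by
    intro w
    rw [← map_sub, RCLike.norm_conj]
  simp only [e2, e3]
  exact h2.norm_norm

/-- An entire function vanishing on the real axis vanishes identically. -/
lemma entire_zero_of_real_zero (g : ℂ → ℂ) (hg : Differentiable ℂ g)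
    (h : ∀ r : ℝ, g r = 0) : ∀ z : ℂ, g z = 0 := by
  have hA : AnalyticOnNhd ℂ g Set.univ := fun z _ => hg.analyticAt z
  have hseq : Filter.Tendsto (fun n : ℕ => ((1 / (n + 1) : ℝ) : ℂ)) Filter.atTop
      (nhdsWithin 0 {(0 : ℂ)}ᶜ) := by
    apply tendsto_nhdsWithin_of_tendsto_nhds_of_eventually_within
    · have h1 : Filter.Tendsto (fun n : ℕ => (1 / (n + 1) : ℝ)) Filter.atTop (nhds 0) :=
        tendsto_one_div_add_atTop_nhds_zero_nat
      have h2 := (Complex.continuous_ofReal.tendsto 0).comp h1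
      simpa [Function.comp_def] using h2
    · filter_upwards with n
      simp only [Set.mem_compl_iff, Set.mem_singleton_iff]
      intro hc
      have : (1 / (n + 1) : ℝ) = 0 := by exact_mod_cast hc
      have hn : (0 : ℝ) < 1 / (n + 1) := by positivity
      linarith
  have hfreq : ∃ᶠ w in nhdsWithin (0 : ℂ) {(0 : ℂ)}ᶜ, g w = 0 := by
    apply hseq.frequently
    exact Filter.Frequently.of_forall fun n => h _
  intro z
  exact hA.eqOn_zero_of_preconnected_of_frequently_eq_zero isPreconnected_univ
    (Set.mem_univ 0) hfreq (Set.mem_univ z)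

/-- an entire function `b₁` satisfies the Killing equation
`(1+|ξ|²)·(b₁' − conj(b₁')) = 2·conj(ξ)·b₁ − 2·ξ·conj(b₁)`
iff `b₁(ξ) = c₃ + c₄·ξ − conj(c₃)·ξ²` for some `c₃ ∈ ℂ`, `c₄ ∈ ℝ`. -/
theorem translational_killing_fields (b₁ : ℂ → ℂ) (hb₁ : Differentiable ℂ b₁) :
    (∀ ξ : ℂ,
      ((1 + normSq ξ : ℝ) : ℂ) * (deriv b₁ ξ - conj (deriv b₁ ξ)) =
        2 * conj ξ * b₁ ξ - 2 * ξ * conj (b₁ ξ)) ↔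
    ∃ (c₃ : ℂ) (c₄ : ℝ), ∀ ξ : ℂ,
      b₁ ξ = c₃ + (c₄ : ℂ) * ξ - conj c₃ * ξ ^ 2 := by
  have hderiv : Differentiable ℂ (deriv b₁) := by
    have hAOn : AnalyticOnNhd ℂ b₁ Set.univ := fun w _ => hb₁.analyticAt w
    intro z
    exact (hAOn.deriv z (Set.mem_univ z)).differentiableAt
  constructor
  · intro h
    -- conjugated functions
    set cb : ℂ → ℂ := fun w => conj (b₁ (conj w)) with hcb_def
    set cd : ℂ → ℂ := fun w => conj (deriv b₁ (conj w)) with hcd_def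
    have hcb : Differentiable ℂ cb := fun w =>
      (hasDerivAt_conj_conj b₁ (deriv b₁ (conj w)) w (hb₁ _).hasDerivAt).differentiableAt
    have hcd : Differentiable ℂ cd := fun w =>
      (hasDerivAt_conj_conj (deriv b₁) (deriv (deriv b₁) (conj w)) w
        (hderiv _).hasDerivAt).differentiableAt
    -- the polarized function
    set A : ℂ → ℂ → ℂ := fun z w =>
      (1 + z * w) * (deriv b₁ z - cd w) - 2 * (w * b₁ z - z * cb w) with hA_def
    have hdiag : ∀ z : ℂ, A z (conj z) = 0 := by
      intro z
      have hz := h z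
      rw [Complex.ofReal_add, Complex.ofReal_one, ← Complex.mul_conj] at hz
      simp only [hA_def, hcb_def, hcd_def, Complex.conj_conj]
      linear_combination hz
    -- differentiability in each variable
    have hAz : ∀ w : ℂ, Differentiable ℂ (fun z => A z w) := by
      intro w
      simp only [hA_def]
      exact (((differentiable_const _).add
        ((differentiable_id).mul (differentiable_const _))).mul
        (hderiv.sub (differentiable_const _))).sub
        (((differentiable_const _).mul (((differentiable_const _).mul hb₁).sub
          ((differentiable_id).mul (differentiable_const _)))))
    have hAw : ∀ z : ℂ, Differentiable ℂ (fun w => A z w) := by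
      intro z
      simp only [hA_def]
      exact (((differentiable_const _).add
        ((differentiable_const _).mul differentiable_id)).mul
        ((differentiable_const _).sub hcd)).sub
        ((differentiable_const _).mul (((differentiable_id).mul
          (differentiable_const _)).sub ((differentiable_const _).mul hcb)))
    -- B u v = A (u + I v) (u - I v)
    set B : ℂ → ℂ → ℂ := fun u v => A (u + Complex.I * v) (u - Complex.I * v) with hB_def
    have hBreal : ∀ u v : ℝ, B (u : ℂ) (v : ℂ) = 0 := by
      intro u v
      have hconj : conj ((u : ℂ) + Complex.I * (v : ℂ)) = (u : ℂ) - Complex.I * (v : ℂ) := by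
        simp [map_add, map_mul, Complex.conj_ofReal, Complex.conj_I]
        ring
      simp only [hB_def]
      rw [← hconj]
      exact hdiag _
    have hBu : ∀ u : ℝ, ∀ v : ℂ, B (u : ℂ) v = 0 := by
      intro u
      apply entire_zero_of_real_zero (fun v => B (u : ℂ) v)
      · intro v
        simp only [hB_def]
        have h1 : Differentiable ℂ (fun v : ℂ => (u : ℂ) + Complex.I * v) :=
          (differentiable_const _).add ((differentiable_const _).mul differentiable_id)
        have h2 : Differentiable ℂ (fun v : ℂ => (u : ℂ) - Complex.I * v) :=
          (differentiable_const _).sub ((differentiable_const _).mul differentiable_id)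
        -- A z w is jointly polynomial in (z, w, b₁ z, deriv b₁ z, cb w, cd w)
        simp only [hA_def]
        apply Differentiable.sub
        · exact (((differentiable_const _).add (h1.mul h2)).mul
            ((hderiv.comp h1).sub (hcd.comp h2)))
        · exact ((differentiable_const _).mul ((h2.mul (hb₁.comp h1)).sub
            (h1.mul (hcb.comp h2))))
      · intro r
        exact hBreal u r
    have hBall : ∀ u v : ℂ, B u v = 0 := by
      intro u v
      revert u
      apply entire_zero_of_real_zero (fun u => B u v)
      · intro u
        simp only [hB_def]
        have h1 : Differentiable ℂ (fun u : ℂ => u + Complex.I * v) :=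
          differentiable_id.add (differentiable_const _)
        have h2 : Differentiable ℂ (fun u : ℂ => u - Complex.I * v) :=
          differentiable_id.sub (differentiable_const _)
        simp only [hA_def]
        apply Differentiable.sub
        · exact (((differentiable_const _).add (h1.mul h2)).mul
            ((hderiv.comp h1).sub (hcd.comp h2)))
        · exact ((differentiable_const _).mul ((h2.mul (hb₁.comp h1)).sub
            (h1.mul (hcb.comp h2))))
      · intro r
        exact hBu r v
    have hAall : ∀ z w : ℂ, A z w = 0 := by
      intro z w
      have := hBall ((z + w) / 2) ((z - w) / (2 * Complex.I))
      have e1 : (z + w) / 2 + Complex.I * ((z - w) / (2 * Complex.I)) = z := by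
        field_simp
        ring_nf
      have e2 : (z + w) / 2 - Complex.I * ((z - w) / (2 * Complex.I)) = w := by
        field_simp
        ring_nf
      simp only [hB_def] at this
      rw [e1, e2] at this
      exact this
    -- set w = 0 to get the ODE for b₁
    have hODE : ∀ z : ℂ, deriv b₁ z = conj (deriv b₁ 0) - 2 * conj (b₁ 0) * z := by
      intro z
      have := hAall z 0
      simp only [hA_def, hcb_def, hcd_def, map_zero, mul_zero, zero_mul, add_zero] at this
      linear_combination this
    -- deriv b₁ 0 is real
    have h0 := h 0
    simp only [map_zero, normSq_zero, mul_zero, zero_mul, sub_zero, zero_sub, neg_zero] at h0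
    have hreal : conj (deriv b₁ 0) = deriv b₁ 0 := by
      have : ((1 : ℝ) : ℂ) * (deriv b₁ 0 - conj (deriv b₁ 0)) = 0 := by
        simpa using h0
      simp only [Complex.ofReal_one, one_mul, sub_eq_zero] at this
      exact this.symm
    refine ⟨b₁ 0, (deriv b₁ 0).re, fun ξ => ?_⟩
    have hre : ((deriv b₁ 0).re : ℂ) = deriv b₁ 0 := by
      rw [← Complex.conj_eq_iff_re]
      exact hreal
    -- integrate: φ := b₁ - polynomial has zero derivative
    set p : ℂ → ℂ := fun ξ => b₁ 0 + deriv b₁ 0 * ξ - conj (b₁ 0) * ξ ^ 2 with hp_def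
    have hφdiff : Differentiable ℂ (fun ξ => b₁ ξ - p ξ) := by
      apply hb₁.sub
      simp only [hp_def]
      exact ((differentiable_const _).add ((differentiable_const _).mul differentiable_id)).sub
        ((differentiable_const _).mul (differentiable_id.pow 2))
    have hφderiv : ∀ ξ : ℂ, deriv (fun ξ => b₁ ξ - p ξ) ξ = 0 := by
      intro ξ
      have hp' : HasDerivAt p (deriv b₁ 0 - conj (b₁ 0) * (2 * ξ)) ξ := by
        have h1 : HasDerivAt (fun ξ : ℂ => b₁ 0 + deriv b₁ 0 * ξ) (deriv b₁ 0) ξ := by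
          simpa using ((hasDerivAt_id ξ).const_mul (deriv b₁ 0)).const_add (b₁ 0)
        have h2 : HasDerivAt (fun ξ : ℂ => conj (b₁ 0) * ξ ^ 2) (conj (b₁ 0) * (2 * ξ)) ξ := by
          simpa using (hasDerivAt_pow 2 ξ).const_mul (conj (b₁ 0))
        exact h1.sub h2
      have hb' : HasDerivAt b₁ (deriv b₁ ξ) ξ := (hb₁ ξ).hasDerivAt
      have := (show HasDerivAt (fun ξ => b₁ ξ - p ξ) _ ξ from hb'.sub hp').deriv
      rw [this, hODE ξ, hreal]
      ring
    have hconst := is_const_of_deriv_eq_zero hφdiff hφderiv ξ 0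
    have hp0 : p 0 = b₁ 0 := by simp [hp_def]
    have : b₁ ξ - p ξ = b₁ 0 - p 0 := hconst
    rw [hp0, sub_self, sub_eq_zero] at this
    rw [this, hp_def, hre]
  · rintro ⟨c₃, c₄, hf⟩
    intro ξ
    have hfun : b₁ = fun ξ => c₃ + (c₄ : ℂ) * ξ - conj c₃ * ξ ^ 2 := funext hf
    have hD : HasDerivAt (fun ξ : ℂ => c₃ + (c₄ : ℂ) * ξ - conj c₃ * ξ ^ 2)
        ((c₄ : ℂ) - conj c₃ * (2 * ξ)) ξ := by
      have h1 : HasDerivAt (fun ξ : ℂ => c₃ + (c₄ : ℂ) * ξ) ((c₄ : ℂ)) ξ := by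
        simpa using ((hasDerivAt_id ξ).const_mul ((c₄ : ℂ))).const_add c₃
      have h2 : HasDerivAt (fun ξ : ℂ => conj c₃ * ξ ^ 2) (conj c₃ * (2 * ξ)) ξ := by
        simpa using (hasDerivAt_pow 2 ξ).const_mul (conj c₃)
      exact h1.sub h2
    rw [hfun]
    rw [show deriv (fun ξ : ℂ => c₃ + (c₄ : ℂ) * ξ - conj c₃ * ξ ^ 2) ξ
        = (c₄ : ℂ) - conj c₃ * (2 * ξ) from hD.deriv]
    rw [Complex.ofReal_add, Complex.ofReal_one, ← Complex.mul_conj]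
    simp only [map_sub, map_add, map_mul, map_pow, Complex.conj_conj, Complex.conj_ofReal,
      map_ofNat]
    ring
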